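/- arXiv:1402.2083 — 5 statements merged into one kernel-verified Lean document; each statement's English description precedes it below -/
import Mathlib

section
/- Let w_n be the Moser sequence and λ_n := (1 − (log log n)/(4 log n))^{1/2}, R_n := √(log n)/(log log n), and u_n(x) := λ_n w_n(x/R_n). Then ∫_{ℝ²}(e^{4π u_n²} − 1) dx ≥ π R_n² (1/√(log n) − 1/n²), and consequently ∫_{ℝ²}(e^{4π u_n²} − 1) dx → +∞ as n → ∞. -/
open MeasureTheory Real Filter

lemma aux_sqrt_div_log_sq : Tendsto (fun t : ℝ => Real.sqrt t / (Real.log t) ^ 2) atTop atTop := by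
  have h := (isLittleO_log_rpow_rpow_atTop (2:ℝ)
    (by norm_num : (0:ℝ) < 1/2)).tendsto_div_nhds_zero
  have h2 : Tendsto (fun t : ℝ => (Real.log t) ^ 2 / Real.sqrt t) atTop (nhdsWithin 0 (Set.Ioi 0)) := by
    apply tendsto_nhdsWithin_of_tendsto_nhds_of_eventually_within
    · refine h.congr' ?_
      filter_upwards [eventually_ge_atTop (1:ℝ)] with t ht
      rw [Real.rpow_two, ← Real.sqrt_eq_rpow]
    · filter_upwards [eventually_gt_atTop (3:ℝ)] with t ht
      have hlt : 0 < Real.log t := Real.log_pos (by linarith)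
      have : 0 < Real.sqrt t := Real.sqrt_pos.2 (by linarith)
      exact div_pos (by positivity) this
  have h3 := h2.inv_tendsto_nhdsGT_zero
  refine h3.congr fun t => ?_
  simp [Pi.inv_apply, inv_div]

lemma moser_key
    (w : ℕ → EuclideanSpace ℝ (Fin 2) → ℝ)
    (lam R : ℕ → ℝ)
    (u : ℕ → EuclideanSpace ℝ (Fin 2) → ℝ)
    (n : ℕ) (hn : 3 ≤ n)
    (hw : ∀ x : EuclideanSpace ℝ (Fin 2),
      w n x = if ‖x‖ ≤ 1 / (n : ℝ) then (1 / Real.sqrt (2 * π)) * Real.sqrt (Real.log n)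
        else if ‖x‖ ≤ 1 then
          (1 / Real.sqrt (2 * π)) * (1 / Real.sqrt (Real.log n)) * Real.log (1 / ‖x‖)
        else 0)
    (hlam : lam n = Real.sqrt (1 - Real.log (Real.log n) / (4 * Real.log n)))
    (hR : R n = Real.sqrt (Real.log n) / Real.log (Real.log n))
    (hu : ∀ x : EuclideanSpace ℝ (Fin 2), u n x = lam n * w n ((R n)⁻¹ • x)) :
    π * (R n) ^ 2 * (1 / Real.sqrt (Real.log n) - 1 / (n : ℝ) ^ 2) ≤
      ∫ x : EuclideanSpace ℝ (Fin 2), (Real.exp (4 * π * (u n x) ^ 2) - 1) ∂volume := by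
  have hn3 : (3:ℝ) ≤ (n:ℝ) := by exact_mod_cast hn
  have hn0 : (0:ℝ) < (n:ℝ) := by linarith
  have hLn : 1 < Real.log n := by
    rw [Real.lt_log_iff_exp_lt hn0]
    have := Real.exp_one_lt_d9; linarith
  have hLn0 : 0 < Real.log n := by linarith
  have hLLn : 0 < Real.log (Real.log n) := Real.log_pos hLn
  have hsLn : 0 < Real.sqrt (Real.log n) := Real.sqrt_pos.2 hLn0
  have hR0 : 0 < R n := by rw [hR]; exact div_pos hsLn hLLn
  have hrad : 0 ≤ 1 - Real.log (Real.log n) / (4 * Real.log n) := by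
    have h1 : Real.log (Real.log n) ≤ Real.log n :=
      (Real.log_le_sub_one_of_pos hLn0).trans (by linarith)
    rw [sub_nonneg, div_le_one (by linarith)]
    linarith
  have hlam2 : lam n ^ 2 = 1 - Real.log (Real.log n) / (4 * Real.log n) := by
    rw [hlam, Real.sq_sqrt hrad]
  have hlam0 : 0 ≤ lam n := by rw [hlam]; exact Real.sqrt_nonneg _
  set a : ℝ := lam n * ((1 / Real.sqrt (2 * π)) * Real.sqrt (Real.log n)) with ha
  have h2pi : (Real.sqrt (2 * π)) ^ 2 = 2 * π := Real.sq_sqrt (by positivity)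
  have hsq : (Real.sqrt (Real.log n)) ^ 2 = Real.log n := Real.sq_sqrt hLn0.le
  have hE : 4 * π * a ^ 2 = 2 * Real.log n - Real.log (Real.log n) / 2 := by
    rw [ha, mul_pow, mul_pow, div_pow, one_pow, h2pi, hsq, hlam2]
    have hpi : (0:ℝ) < π := Real.pi_pos
    field_simp
    ring
  have hsqexp : Real.sqrt (Real.log n) = Real.exp (Real.log (Real.log n) / 2) := by
    rw [Real.sqrt_eq_rpow, Real.rpow_def_of_pos hLn0]
    ring_nf
  have hcexp : Real.exp (4 * π * a ^ 2) = (n:ℝ) ^ 2 / Real.sqrt (Real.log n) := by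
    rw [hE, Real.exp_sub, hsqexp, two_mul, Real.exp_add, Real.exp_log hn0, sq]
  set c : ℝ := (n:ℝ) ^ 2 / Real.sqrt (Real.log n) - 1 with hc
  -- bounds on w
  have hwnn : ∀ y : EuclideanSpace ℝ (Fin 2), 0 ≤ w n y := by
    intro y
    rw [hw y]
    split_ifs with h1 h2
    · positivity
    · push_neg at h1
      have hy0 : 0 < ‖y‖ := lt_trans (by positivity) h1
      have : (1:ℝ) ≤ 1 / ‖y‖ := by
        rw [le_div_iff₀ hy0]; linarith
      have := Real.log_nonneg this
      positivity
    · exact le_refl _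
  have hwle : ∀ y : EuclideanSpace ℝ (Fin 2),
      w n y ≤ (1 / Real.sqrt (2 * π)) * Real.sqrt (Real.log n) := by
    intro y
    rw [hw y]
    split_ifs with h1 h2
    · exact le_refl _
    · push_neg at h1
      have hy0 : 0 < ‖y‖ := lt_trans (by positivity) h1
      have hlog : Real.log (1 / ‖y‖) ≤ Real.log n := by
        apply Real.log_le_log (by positivity)
        rw [div_le_iff₀ hy0]
        rw [div_lt_iff₀ hn0] at h1
        linarith
      have hst : (1 / Real.sqrt (2 * π)) * (1 / Real.sqrt (Real.log n)) * Real.log (1 / ‖y‖)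
          ≤ (1 / Real.sqrt (2 * π)) * (1 / Real.sqrt (Real.log n)) * Real.log n := by
        apply mul_le_mul_of_nonneg_left hlog (by positivity)
      refine hst.trans (le_of_eq ?_)
      have hd : (1 / Real.sqrt (Real.log n)) * Real.log n = Real.sqrt (Real.log n) := by
        rw [one_div, inv_mul_eq_div, Real.div_sqrt]
      rw [mul_assoc, hd]
    · positivity
  -- bound on u
  have hu_nn : ∀ x : EuclideanSpace ℝ (Fin 2), 0 ≤ u n x := by
    intro x; rw [hu x]; exact mul_nonneg hlam0 (hwnn _)
  have hu_le : ∀ x : EuclideanSpace ℝ (Fin 2), u n x ≤ a := by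
    intro x; rw [hu x, ha]
    exact mul_le_mul_of_nonneg_left (hwle _) hlam0
  have hexp_le : ∀ x : EuclideanSpace ℝ (Fin 2),
      Real.exp (4 * π * (u n x) ^ 2) - 1 ≤ c := by
    intro x
    rw [hc, ← hcexp]
    apply sub_le_sub_right
    apply Real.exp_le_exp.2
    apply mul_le_mul_of_nonneg_left _ (by positivity)
    exact pow_le_pow_left₀ (hu_nn x) (hu_le x) 2
  have hg_nn : ∀ x : EuclideanSpace ℝ (Fin 2),
      0 ≤ Real.exp (4 * π * (u n x) ^ 2) - 1 := by
    intro x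
    have : (1:ℝ) ≤ Real.exp (4 * π * (u n x) ^ 2) := by
      rw [show (1:ℝ) = Real.exp 0 by simp]
      exact Real.exp_le_exp.2 (by positivity)
    linarith
  -- measurability
  have hwm : Measurable (w n) := by
    have hwe : w n = fun y : EuclideanSpace ℝ (Fin 2) =>
        if ‖y‖ ≤ 1 / (n : ℝ) then (1 / Real.sqrt (2 * π)) * Real.sqrt (Real.log n)
        else if ‖y‖ ≤ 1 then
          (1 / Real.sqrt (2 * π)) * (1 / Real.sqrt (Real.log n)) * Real.log (1 / ‖y‖)
        else 0 := funext hw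
    rw [hwe]
    apply Measurable.ite (measurableSet_le measurable_norm measurable_const) measurable_const
    apply Measurable.ite (measurableSet_le measurable_norm measurable_const) _ measurable_const
    exact measurable_const.mul (Real.measurable_log.comp (measurable_const.div measurable_norm))
  have hum : Measurable (u n) := by
    have hue : u n = fun x : EuclideanSpace ℝ (Fin 2) => lam n * w n ((R n)⁻¹ • x) := funext hu
    rw [hue]
    exact measurable_const.mul (hwm.comp (by fun_prop))
  have hgm : Measurable (fun x : EuclideanSpace ℝ (Fin 2) =>
      Real.exp (4 * π * (u n x) ^ 2) - 1) :=
    (Real.measurable_exp.comp (measurable_const.mul (hum.pow_const 2))).sub measurable_const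
  -- vanishing outside closedBall 0 (R n)
  have houter : ∀ x : EuclideanSpace ℝ (Fin 2), R n < ‖x‖ →
      Real.exp (4 * π * (u n x) ^ 2) - 1 = 0 := by
    intro x hx
    have hnorm : ‖(R n)⁻¹ • x‖ = ‖x‖ / R n := by
      rw [norm_smul, norm_inv, Real.norm_eq_abs, abs_of_pos hR0, inv_mul_eq_div]
    have h1 : 1 < ‖(R n)⁻¹ • x‖ := by
      rw [hnorm, lt_div_iff₀ hR0]; linarith
    have hw0 : w n ((R n)⁻¹ • x) = 0 := by
      rw [hw]
      rw [if_neg, if_neg]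
      · linarith
      · push_neg
        have : 1 / (n:ℝ) ≤ 1 := by
          rw [div_le_one hn0]; linarith
        linarith
    rw [hu, hw0, mul_zero]
    simp
  have hc0 : 0 ≤ c := by
    have := (hg_nn 0).trans (hexp_le 0)
    exact this
  -- integrability
  have hInt : Integrable (fun x : EuclideanSpace ℝ (Fin 2) =>
      Real.exp (4 * π * (u n x) ^ 2) - 1) volume := by
    apply Integrable.mono'
      ((integrable_indicator_iff (measurableSet_closedBall (x := (0 : EuclideanSpace ℝ (Fin 2)))
        (ε := R n))).2 (integrableOn_const (C := c) measure_closedBall_lt_top.ne))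
      hgm.aestronglyMeasurable
    apply ae_of_all
    intro x
    rw [Real.norm_eq_abs, abs_of_nonneg (hg_nn x)]
    by_cases hx : ‖x‖ ≤ R n
    · have hmem : x ∈ Metric.closedBall (0 : EuclideanSpace ℝ (Fin 2)) (R n) := by
        simpa [Metric.mem_closedBall, dist_zero_right] using hx
      rw [Set.indicator_of_mem hmem]
      exact hexp_le x
    · push_neg at hx
      have hmem : x ∉ Metric.closedBall (0 : EuclideanSpace ℝ (Fin 2)) (R n) := by
        simp [Metric.mem_closedBall, dist_zero_right]; linarith
      rw [Set.indicator_of_notMem hmem, houter x hx]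
  -- the set integral over the small ball
  have hball : ∀ x ∈ Metric.ball (0 : EuclideanSpace ℝ (Fin 2)) (R n / n),
      Real.exp (4 * π * (u n x) ^ 2) - 1 = c := by
    intro x hx
    rw [Metric.mem_ball, dist_zero_right] at hx
    have hnorm : ‖(R n)⁻¹ • x‖ = ‖x‖ / R n := by
      rw [norm_smul, norm_inv, Real.norm_eq_abs, abs_of_pos hR0, inv_mul_eq_div]
    have h1 : ‖(R n)⁻¹ • x‖ ≤ 1 / (n:ℝ) := by
      rw [hnorm, div_le_div_iff₀ hR0 hn0]
      rw [lt_div_iff₀ hn0] at hx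
      linarith [mul_comm (‖x‖) (n:ℝ)]
    have hwv : w n ((R n)⁻¹ • x) = (1 / Real.sqrt (2 * π)) * Real.sqrt (Real.log n) := by
      rw [hw, if_pos h1]
    rw [hu, hwv, ← ha, hc, ← hcexp]
  have h2 : ∫ x in Metric.ball (0 : EuclideanSpace ℝ (Fin 2)) (R n / n),
      (Real.exp (4 * π * (u n x) ^ 2) - 1) ∂volume
      = c * (volume (Metric.ball (0 : EuclideanSpace ℝ (Fin 2)) (R n / n))).toReal := by
    rw [setIntegral_congr_fun measurableSet_ball hball, setIntegral_const, smul_eq_mul, mul_comm]; rfl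
  have hvol : (volume (Metric.ball (0 : EuclideanSpace ℝ (Fin 2)) (R n / n))).toReal
      = π * (R n / n) ^ 2 := by
    rw [EuclideanSpace.volume_ball]
    have hr0 : 0 ≤ R n / n := by positivity
    rw [show (Fintype.card (Fin 2)) = 2 from Fintype.card_fin 2]
    rw [show ((2:ℕ) / 2 + 1 : ℝ) = 2 by norm_num]
    rw [Real.Gamma_two]
    rw [← ENNReal.ofReal_pow hr0, ← ENNReal.ofReal_mul (by positivity)]
    rw [ENNReal.toReal_ofReal (by positivity)]
    rw [Real.sq_sqrt Real.pi_nonneg]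
    ring
  have h1 : ∫ x in Metric.ball (0 : EuclideanSpace ℝ (Fin 2)) (R n / n),
      (Real.exp (4 * π * (u n x) ^ 2) - 1) ∂volume
      ≤ ∫ x : EuclideanSpace ℝ (Fin 2), (Real.exp (4 * π * (u n x) ^ 2) - 1) ∂volume :=
    setIntegral_le_integral hInt (ae_of_all _ hg_nn)
  have hsne : Real.sqrt (Real.log n) ≠ 0 := ne_of_gt hsLn
  have hnne : (n:ℝ) ≠ 0 := ne_of_gt hn0
  calc π * R n ^ 2 * (1 / Real.sqrt (Real.log n) - 1 / (n:ℝ) ^ 2)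
      = c * (π * (R n / n) ^ 2) := by rw [hc]; field_simp
    _ = ∫ x in Metric.ball (0 : EuclideanSpace ℝ (Fin 2)) (R n / n),
        (Real.exp (4 * π * (u n x) ^ 2) - 1) ∂volume := by rw [h2, hvol]
    _ ≤ ∫ x : EuclideanSpace ℝ (Fin 2), (Real.exp (4 * π * (u n x) ^ 2) - 1) ∂volume := h1


/-- The rescaled Moser sequence `uₙ(x) = λₙ wₙ(x/Rₙ)` makes the critical
Trudinger–Moser functional blow up:
`∫(e^{4π uₙ²} − 1) ≥ π Rₙ² (1/√(log n) − 1/n²) → +∞`. -/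
theorem rescaled_moser_blow_up
    (w : ℕ → EuclideanSpace ℝ (Fin 2) → ℝ)
    (hw : ∀ n, 2 ≤ n → ∀ x : EuclideanSpace ℝ (Fin 2),
      w n x = if ‖x‖ ≤ 1 / (n : ℝ) then (1 / Real.sqrt (2 * π)) * Real.sqrt (Real.log n)
        else if ‖x‖ ≤ 1 then
          (1 / Real.sqrt (2 * π)) * (1 / Real.sqrt (Real.log n)) * Real.log (1 / ‖x‖)
        else 0)
    (lam R : ℕ → ℝ)
    (hlam : ∀ n, lam n = Real.sqrt (1 - Real.log (Real.log n) / (4 * Real.log n)))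
    (hR : ∀ n, R n = Real.sqrt (Real.log n) / Real.log (Real.log n))
    (u : ℕ → EuclideanSpace ℝ (Fin 2) → ℝ)
    (hu : ∀ n, ∀ x : EuclideanSpace ℝ (Fin 2), u n x = lam n * w n ((R n)⁻¹ • x)) :
    (∀ n, 3 ≤ n →
      π * (R n) ^ 2 * (1 / Real.sqrt (Real.log n) - 1 / (n : ℝ) ^ 2) ≤
        ∫ x : EuclideanSpace ℝ (Fin 2), (Real.exp (4 * π * (u n x) ^ 2) - 1) ∂volume) ∧
    Tendsto (fun n : ℕ =>
      ∫ x : EuclideanSpace ℝ (Fin 2), (Real.exp (4 * π * (u n x) ^ 2) - 1) ∂volume)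
      atTop atTop := by
  have key : ∀ n, 3 ≤ n →
      π * (R n) ^ 2 * (1 / Real.sqrt (Real.log n) - 1 / (n : ℝ) ^ 2) ≤
        ∫ x : EuclideanSpace ℝ (Fin 2), (Real.exp (4 * π * (u n x) ^ 2) - 1) ∂volume :=
    fun n hn => moser_key w lam R u n hn (hw n (by omega)) (hlam n) (hR n) (hu n)
  refine ⟨key, ?_⟩
  have hpsi : Tendsto (fun n : ℕ =>
      π / 2 * (Real.sqrt (Real.log n) / (Real.log (Real.log n)) ^ 2)) atTop atTop := by
    have h1 := aux_sqrt_div_log_sq.comp (Real.tendsto_log_atTop.comp tendsto_natCast_atTop_atTop)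
    exact Tendsto.const_mul_atTop (by positivity) h1
  refine tendsto_atTop_mono' atTop ?_ hpsi
  filter_upwards [eventually_ge_atTop 3] with n hn
  refine le_trans ?_ (key n hn)
  have hn3 : (3:ℝ) ≤ (n:ℝ) := by exact_mod_cast hn
  have hn0 : (0:ℝ) < (n:ℝ) := by linarith
  have hLn : 1 < Real.log n := by
    rw [Real.lt_log_iff_exp_lt hn0]
    have := Real.exp_one_lt_d9; linarith
  have hLn0 : 0 < Real.log n := by linarith
  have hLLn : 0 < Real.log (Real.log n) := Real.log_pos hLn
  have hsLn : 0 < Real.sqrt (Real.log n) := Real.sqrt_pos.2 hLn0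
  have hR2 : R n ^ 2 = Real.log n / (Real.log (Real.log n)) ^ 2 := by
    rw [hR n, div_pow, Real.sq_sqrt hLn0.le]
  have h2s : 2 * Real.sqrt (Real.log n) ≤ (n:ℝ) ^ 2 := by
    have h1 : Real.sqrt (Real.log n) ≤ Real.log n := by
      have := Real.sqrt_le_sqrt (show Real.log n ≤ (Real.log n) ^ 2 by nlinarith)
      rwa [Real.sqrt_sq hLn0.le] at this
    have h2 : Real.log n ≤ (n:ℝ) - 1 := Real.log_le_sub_one_of_pos hn0
    nlinarith
  have hsub : 1 / (n:ℝ) ^ 2 ≤ 1 / (2 * Real.sqrt (Real.log n)) :=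
    one_div_le_one_div_of_le (by positivity) h2s
  calc π / 2 * (Real.sqrt (Real.log n) / (Real.log (Real.log n)) ^ 2)
      = π * (R n) ^ 2 * (1 / Real.sqrt (Real.log n) - 1 / (2 * Real.sqrt (Real.log n))) := by
        rw [hR2]
        set l : ℝ := Real.log (Real.log n) with hl
        have hss : Real.sqrt (Real.log n) * Real.sqrt (Real.log n) = Real.log n :=
          Real.mul_self_sqrt hLn0.le
        rw [← hss]
        have hsne : Real.sqrt (Real.log n) ≠ 0 := ne_of_gt hsLn
        have hlne : l ≠ 0 := ne_of_gt hLLn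
        field_simp
        ring_nf
        rw [Real.sq_sqrt hLn0.le]
        exact Real.sq_sqrt hLn0.le
    _ ≤ π * (R n) ^ 2 * (1 / Real.sqrt (Real.log n) - 1 / (n:ℝ) ^ 2) := by
        apply mul_le_mul_of_nonneg_left (sub_le_sub_left hsub _) (by positivity)
end

section
/- Suppose that Ruf's inequality holds, i.e., there exists d < ∞ such that ∫_{ℝ²}(e^{4π u²} − 1) dx ≤ d for all u ∈ H¹(ℝ²) with ‖∇u‖₂² + ‖u‖₂² ≤ 1. Then for every β ∈ (0, 4π) and every u ∈ H¹(ℝ²) with ‖∇u‖₂ ≤ 1, one has ∫_{ℝ²}(e^{β u²} − 1) dx ≤ (d / (1 − β/(4π))) · ‖u‖₂². -/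
open MeasureTheory Real

/-- Membership in `H¹(ℝ²)`: a differentiable function which, together with its
gradient, belongs to `L²(ℝ²)`. -/
def MemH1 (u : EuclideanSpace ℝ (Fin 2) → ℝ) : Prop :=
  Differentiable ℝ u ∧ MemLp u 2 (volume : Measure (EuclideanSpace ℝ (Fin 2))) ∧
    MemLp (fun x => fderiv ℝ u x) 2 (volume : Measure (EuclideanSpace ℝ (Fin 2)))

local notation "E2" => EuclideanSpace ℝ (Fin 2)

lemma integral_comp_smul_two (g : E2 → ℝ) (μ : ℝ) (hμ : 0 ≤ μ) :
    ∫ x, g (μ • x) ∂(volume : Measure E2) = (μ ^ 2)⁻¹ * ∫ x, g x ∂(volume : Measure E2) := by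
  rw [MeasureTheory.Measure.integral_comp_smul_of_nonneg (volume : Measure E2) g μ (hR := hμ)]
  simp [finrank_euclideanSpace_fin]

lemma memLp_comp_smul {F : Type*} [NormedAddCommGroup F] {g : E2 → F}
    (hg : MemLp g 2 (volume : Measure E2)) {μ : ℝ} (hμ : μ ≠ 0) :
    MemLp (fun x => g (μ • x)) 2 (volume : Measure E2) := by
  let e : E2 ≃ᵐ E2 := (Homeomorph.smul (isUnit_iff_ne_zero.2 hμ).unit).toMeasurableEquiv
  have hcoe : ⇑e = (fun x : E2 => μ • x) := rfl
  have h1 : MemLp g 2 (Measure.map e (volume : Measure E2)) := by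
    rw [hcoe, Measure.map_addHaar_smul (volume : Measure E2) hμ]
    exact hg.smul_measure ENNReal.ofReal_ne_top
  exact (MeasurableEquiv.memLp_map_measure_iff e).mp h1

lemma fderiv_scaled (u : E2 → ℝ) (hu : Differentiable ℝ u) (c μ : ℝ) (x : E2) :
    fderiv ℝ (fun y => c * u (μ • y)) x = (c * μ) • fderiv ℝ u (μ • x) := by
  set L : E2 →L[ℝ] E2 := μ • ContinuousLinearMap.id ℝ E2 with hLdef
  have hLfun : (fun y : E2 => μ • y) = ⇑L := rfl
  have hLd : DifferentiableAt ℝ (fun y : E2 => μ • y) x := by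
    rw [hLfun]; exact L.differentiableAt
  have hcomp : fderiv ℝ (fun y => u (μ • y)) x
      = (fderiv ℝ u (μ • x)).comp (fderiv ℝ (fun y : E2 => μ • y) x) :=
    fderiv_comp x (hu (μ • x)) hLd
  have hLf : fderiv ℝ (fun y : E2 => μ • y) x = L := by rw [hLfun]; exact L.fderiv
  have hd : DifferentiableAt ℝ (fun y : E2 => u (μ • y)) x := (hu (μ • x)).comp x hLd
  rw [fderiv_const_mul hd c, hcomp, hLf]
  ext v
  have hLv : L v = μ • v := rfl
  simp only [ContinuousLinearMap.smul_apply, ContinuousLinearMap.coe_comp', Function.comp_apply,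
    hLv, _root_.map_smul, smul_eq_mul]
  ring

/-- Ruf's inequality implies the improved Adachi–Tanaka inequality
`∫(e^{βu²}−1) ≤ (d/(1−β/4π)) ‖u‖₂²` for `β ∈ (0,4π)` and `‖∇u‖₂ ≤ 1`. -/
theorem ruf_implies_improved_adachi_tanaka
    (d : ℝ)
    (hruf : ∀ u : EuclideanSpace ℝ (Fin 2) → ℝ, MemH1 u →
      (∫ x, ‖fderiv ℝ u x‖ ^ 2 ∂volume) + (∫ x, (u x) ^ 2 ∂volume) ≤ 1 →
      ∫ x, (Real.exp (4 * π * (u x) ^ 2) - 1) ∂volume ≤ d) :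
    ∀ β : ℝ, 0 < β → β < 4 * π →
      ∀ u : EuclideanSpace ℝ (Fin 2) → ℝ, MemH1 u →
        (∫ x, ‖fderiv ℝ u x‖ ^ 2 ∂volume) ≤ 1 →
        ∫ x, (Real.exp (β * (u x) ^ 2) - 1) ∂volume ≤
          (d / (1 - β / (4 * π))) * ∫ x, (u x) ^ 2 ∂volume := by
  intro β hβ0 hβ4 u hu hgrad
  have hπ : (0:ℝ) < π := Real.pi_pos
  have h4π : (0:ℝ) < 4 * π := by positivity
  set a : ℝ := β / (4 * π) with ha
  have ha0 : 0 < a := div_pos hβ0 h4π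
  have ha1 : a < 1 := (div_lt_one h4π).2 hβ4
  have h1a : (0:ℝ) < 1 - a := by linarith
  have hd0 : 0 ≤ d := by
    have hz : MemH1 (fun _ : E2 => (0:ℝ)) := by
      refine ⟨differentiable_const 0, ?_, ?_⟩
      · simpa using (MemLp.zero : MemLp (0 : E2 → ℝ) 2 volume)
      · simp only [fderiv_fun_const, Pi.zero_apply]
        exact MemLp.zero' (ε := E2 →L[ℝ] ℝ)
    have h := hruf (fun _ => 0) hz (by simp)
    simpa using h
  obtain ⟨hdiff, hu2, hgrad2⟩ := hu
  have hI0 : 0 ≤ ∫ x, (u x) ^ 2 ∂(volume : Measure E2) := integral_nonneg fun x => sq_nonneg _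
  rcases eq_or_lt_of_le hI0 with hIz | hIpos
  · -- degenerate case : `u = 0` a.e.
    have hint : Integrable (fun x => (u x) ^ 2) (volume : Measure E2) := hu2.integrable_sq
    have hae : (fun x => (u x) ^ 2) =ᵐ[volume] 0 :=
      (integral_eq_zero_iff_of_nonneg (fun x => sq_nonneg _) hint).mp hIz.symm
    have hL : ∫ x, (Real.exp (β * (u x) ^ 2) - 1) ∂(volume : Measure E2) = 0 := by
      have h0 : (fun x => Real.exp (β * (u x) ^ 2) - 1) =ᵐ[volume] 0 :=
        hae.mono fun x hx => by
          have : (u x) ^ 2 = 0 := hx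
          simp [this]
      rw [integral_congr_ae h0]; simp
    rw [hL, ← hIz, mul_zero]
  · -- main case
    set c : ℝ := Real.sqrt a with hc
    set μ : ℝ := Real.sqrt (a * (∫ x, (u x) ^ 2 ∂(volume : Measure E2)) / (1 - a)) with hμdef
    have hc0 : 0 < c := Real.sqrt_pos.2 ha0
    have hμ0 : 0 < μ := Real.sqrt_pos.2 (by positivity)
    have hc2 : c ^ 2 = a := Real.sq_sqrt ha0.le
    have hμ2 : μ ^ 2 = a * (∫ x, (u x) ^ 2 ∂(volume : Measure E2)) / (1 - a) :=
      Real.sq_sqrt (by positivity)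
    set w : E2 → ℝ := fun x => c * u (μ • x) with hw
    have hLd : Differentiable ℝ (fun y : E2 => μ • y) := fun x => by
      have : (fun y : E2 => μ • y) = ⇑(μ • ContinuousLinearMap.id ℝ E2) := rfl
      rw [this]; exact (μ • ContinuousLinearMap.id ℝ E2).differentiableAt
    have hwdiff : Differentiable ℝ w := by
      have : Differentiable ℝ (fun x : E2 => u (μ • x)) := fun x =>
        (hdiff (μ • x)).comp x (hLd x)
      exact this.const_mul c
    have hw2 : MemLp w 2 (volume : Measure E2) := (memLp_comp_smul hu2 hμ0.ne').const_mul c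
    have hfd : ∀ x, fderiv ℝ w x = (c * μ) • fderiv ℝ u (μ • x) := fderiv_scaled u hdiff c μ
    have hwg2 : MemLp (fun x => fderiv ℝ w x) 2 (volume : Measure E2) := by
      have h1 : MemLp (fun x : E2 => fderiv ℝ u (μ • x)) 2 (volume : Measure E2) :=
        memLp_comp_smul hgrad2 hμ0.ne'
      have h2 := h1.const_smul (c * μ)
      have h3 : (fun x => fderiv ℝ w x) = (c * μ) • (fun x : E2 => fderiv ℝ u (μ • x)) := by
        funext x; rw [hfd x]; rfl
      rw [h3]; exact h2
    have hgradw : ∫ x, ‖fderiv ℝ w x‖ ^ 2 ∂(volume : Measure E2)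
        = c ^ 2 * ∫ x, ‖fderiv ℝ u x‖ ^ 2 ∂(volume : Measure E2) := by
      have h1 : ∀ x : E2, ‖fderiv ℝ w x‖ ^ 2 = (c * μ) ^ 2 * ‖fderiv ℝ u (μ • x)‖ ^ 2 := by
        intro x
        rw [hfd x, norm_smul]
        rw [Real.norm_eq_abs, abs_of_pos (mul_pos hc0 hμ0)]
        ring
      calc ∫ x, ‖fderiv ℝ w x‖ ^ 2 ∂(volume : Measure E2)
          = ∫ x, (c * μ) ^ 2 * (fun y => ‖fderiv ℝ u y‖ ^ 2) (μ • x) ∂(volume : Measure E2) := by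
            simp_rw [h1]
        _ = (c * μ) ^ 2 * ∫ x, (fun y => ‖fderiv ℝ u y‖ ^ 2) (μ • x) ∂(volume : Measure E2) :=
            integral_const_mul _ _
        _ = (c * μ) ^ 2 * ((μ ^ 2)⁻¹ * ∫ x, ‖fderiv ℝ u x‖ ^ 2 ∂(volume : Measure E2)) := by
            rw [integral_comp_smul_two (fun y => ‖fderiv ℝ u y‖ ^ 2) μ hμ0.le]
        _ = c ^ 2 * ∫ x, ‖fderiv ℝ u x‖ ^ 2 ∂(volume : Measure E2) := by
            field_simp
    have hw2int : ∫ x, (w x) ^ 2 ∂(volume : Measure E2) = 1 - a := by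
      have hIne : (∫ x, (u x) ^ 2 ∂(volume : Measure E2)) ≠ 0 := ne_of_gt hIpos
      calc ∫ x, (w x) ^ 2 ∂(volume : Measure E2)
          = ∫ x, c ^ 2 * (fun y => (u y) ^ 2) (μ • x) ∂(volume : Measure E2) := by
            simp_rw [hw, mul_pow]
        _ = c ^ 2 * ∫ x, (fun y => (u y) ^ 2) (μ • x) ∂(volume : Measure E2) :=
            integral_const_mul _ _
        _ = c ^ 2 * ((μ ^ 2)⁻¹ * ∫ x, (u x) ^ 2 ∂(volume : Measure E2)) := by
            rw [integral_comp_smul_two (fun y => (u y) ^ 2) μ hμ0.le]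
        _ = 1 - a := by
            rw [hc2, hμ2]
            field_simp
    have hsum : (∫ x, ‖fderiv ℝ w x‖ ^ 2 ∂(volume : Measure E2))
        + (∫ x, (w x) ^ 2 ∂(volume : Measure E2)) ≤ 1 := by
      rw [hgradw, hw2int, hc2]
      nlinarith [ha0.le, hgrad]
    have hconc := hruf w ⟨hwdiff, hw2, hwg2⟩ hsum
    have hwexp : ∀ x : E2, 4 * π * (w x) ^ 2 = β * (u (μ • x)) ^ 2 := by
      intro x
      have h4 : 4 * π * c ^ 2 = β := by
        rw [hc2, ha]; field_simp
      calc 4 * π * (w x) ^ 2 = (4 * π * c ^ 2) * (u (μ • x)) ^ 2 := by rw [hw]; ring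
        _ = β * (u (μ • x)) ^ 2 := by rw [h4]
    have hLHS : ∫ x, (Real.exp (4 * π * (w x) ^ 2) - 1) ∂(volume : Measure E2)
        = (μ ^ 2)⁻¹ * ∫ x, (Real.exp (β * (u x) ^ 2) - 1) ∂(volume : Measure E2) := by
      simp_rw [hwexp]
      exact integral_comp_smul_two (fun y => Real.exp (β * (u y) ^ 2) - 1) μ hμ0.le
    rw [hLHS] at hconc
    have hμ2pos : (0:ℝ) < μ ^ 2 := by positivity
    have hmain : ∫ x, (Real.exp (β * (u x) ^ 2) - 1) ∂(volume : Measure E2) ≤ d * μ ^ 2 := by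
      have h := mul_le_mul_of_nonneg_left hconc hμ2pos.le
      calc ∫ x, (Real.exp (β * (u x) ^ 2) - 1) ∂(volume : Measure E2)
          = μ ^ 2 * ((μ ^ 2)⁻¹ * ∫ x, (Real.exp (β * (u x) ^ 2) - 1) ∂(volume : Measure E2)) := by
            field_simp
        _ ≤ μ ^ 2 * d := h
        _ = d * μ ^ 2 := by ring
    calc ∫ x, (Real.exp (β * (u x) ^ 2) - 1) ∂(volume : Measure E2)
        ≤ d * μ ^ 2 := hmain
      _ = (d / (1 - a)) * (a * ∫ x, (u x) ^ 2 ∂(volume : Measure E2)) := by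
          rw [hμ2]; ring
      _ ≤ (d / (1 - a)) * ∫ x, (u x) ^ 2 ∂(volume : Measure E2) := by
          apply mul_le_mul_of_nonneg_left _ (div_nonneg hd0 h1a.le)
          nlinarith [hIpos.le]
end

section
/- Suppose the improved Adachi–Tanaka inequality holds: there is C > 0 such that for all β < 4π and all u ∈ H¹(ℝ²) with ‖∇u‖₂ ≤ 1, ∫_{ℝ²}(e^{β u²} − 1) dx ≤ (C/(1 − β/(4π))) ‖u‖₂². Then there is a constant C' > 0 such that ∫_{ℝ²}(e^{4π u²} − 1) dx ≤ C' for all u ∈ H¹(ℝ²) with ‖∇u‖₂² + ‖u‖₂² ≤ 1. -/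
set_option maxHeartbeats 1000000


open MeasureTheory Real

/-- The improved Adachi–Tanaka inequality implies Ruf's critical inequality. -/
theorem improved_adachi_tanaka_implies_ruf
    (C : ℝ) (hC : 0 < C)
    (hAT : ∀ β : ℝ, β < 4 * π →
      ∀ u : EuclideanSpace ℝ (Fin 2) → ℝ, MemH1 u →
        (∫ x, ‖fderiv ℝ u x‖ ^ 2 ∂volume) ≤ 1 →
        ∫ x, (Real.exp (β * (u x) ^ 2) - 1) ∂volume ≤
          (C / (1 - β / (4 * π))) * ∫ x, (u x) ^ 2 ∂volume) :
    ∃ C' : ℝ, 0 < C' ∧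
      ∀ u : EuclideanSpace ℝ (Fin 2) → ℝ, MemH1 u →
        (∫ x, ‖fderiv ℝ u x‖ ^ 2 ∂volume) + (∫ x, (u x) ^ 2 ∂volume) ≤ 1 →
        ∫ x, (Real.exp (4 * π * (u x) ^ 2) - 1) ∂volume ≤ C' := by
  refine ⟨4 * C, by positivity, ?_⟩
  intro u hu hle
  obtain ⟨hud, hu2, hug⟩ := hu
  set θ := ∫ x, ‖fderiv ℝ u x‖ ^ 2 ∂volume with hθdef
  set m := ∫ x, (u x) ^ 2 ∂volume with hmdef
  have hθ0 : 0 ≤ θ := integral_nonneg fun x => by positivity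
  have hm0 : 0 ≤ m := integral_nonneg fun x => by positivity
  have hπ : (0:ℝ) < π := Real.pi_pos
  -- fderiv of a constant multiple
  have hfd : ∀ (c : ℝ) (x : EuclideanSpace ℝ (Fin 2)),
      fderiv ℝ (fun y => c * u y) x = c • fderiv ℝ u x := fun c x =>
    fderiv_const_mul (hud.differentiableAt) c
  have hMem : ∀ c : ℝ, MemH1 (fun y => c * u y) := by
    intro c
    refine ⟨fun x => ((hud x).const_mul c), hu2.const_mul c, ?_⟩
    exact (hug.const_smul c).ae_eq (ae_of_all _ fun x => (hfd c x).symm)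
  have hgradint : ∀ c : ℝ,
      (∫ x, ‖fderiv ℝ (fun y => c * u y) x‖ ^ 2 ∂volume) = c ^ 2 * θ := by
    intro c
    rw [hθdef, ← integral_const_mul]
    refine integral_congr_ae (ae_of_all _ fun x => ?_)
    simp only [hfd c x, norm_smul, mul_pow, Real.norm_eq_abs, sq_abs]
  have hsqint : ∀ c : ℝ,
      (∫ x, ((fun y => c * u y) x) ^ 2 ∂volume) = c ^ 2 * m := by
    intro c
    rw [hmdef, ← integral_const_mul]
    refine integral_congr_ae (ae_of_all _ fun x => ?_)
    dsimp only
    ring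
  rcases le_or_gt θ (1/2) with hθhalf | hθhalf
  · -- apply with β = 2π to √2 · u
    have h2π : 2 * π < 4 * π := by nlinarith
    have key := hAT (2 * π) h2π (fun y => Real.sqrt 2 * u y) (hMem _)
      (by rw [hgradint, Real.sq_sqrt (by norm_num : (0:ℝ) ≤ 2)]; linarith)
    rw [hsqint, Real.sq_sqrt (by norm_num : (0:ℝ) ≤ 2)] at key
    have key2 : (∫ x, (Real.exp (4 * π * (u x) ^ 2) - 1) ∂volume)
        = ∫ x, (Real.exp (2 * π * (Real.sqrt 2 * u x) ^ 2) - 1) ∂volume := by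
      refine integral_congr_ae (ae_of_all _ fun x => ?_)
      dsimp only
      have h2 : 2 * π * (Real.sqrt 2 * u x) ^ 2 = 4 * π * (u x) ^ 2 := by
        rw [mul_pow, Real.sq_sqrt (by norm_num : (0:ℝ) ≤ 2)]; ring
      rw [h2]
    rw [← key2] at key
    have hcoef : C / (1 - 2 * π / (4 * π)) = 2 * C := by
      rw [show (1 : ℝ) - 2 * π / (4 * π) = 1/2 by field_simp; ring]
      ring
    rw [hcoef] at key
    have hm1 : m ≤ 1 := by linarith
    nlinarith
  · -- θ > 1/2
    rcases eq_or_lt_of_le hm0 with hm0' | hmpos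
    · -- m = 0 : u = 0 a.e.
      have hint : Integrable (fun x => (u x) ^ 2) volume := hu2.integrable_sq
      have hzero : (fun x => (u x) ^ 2) =ᵐ[volume] 0 := by
        refine (integral_eq_zero_iff_of_nonneg (fun x => by positivity) hint).mp hm0'.symm
      have : (∫ x, (Real.exp (4 * π * (u x) ^ 2) - 1) ∂volume) = 0 := by
        rw [← integral_zero (EuclideanSpace ℝ (Fin 2)) ℝ (μ := volume)]
        refine integral_congr_ae (hzero.mono fun x hx => ?_)
        simp only [Pi.zero_apply] at hx ⊢
        rw [hx]
        simp
      rw [this]; positivity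
    · -- 0 < m, so θ < 1
      have hθ1 : θ < 1 := by linarith
      have hθpos : (0:ℝ) < θ := by linarith
      have hsθ : Real.sqrt θ > 0 := Real.sqrt_pos.mpr hθpos
      set c := (Real.sqrt θ)⁻¹ with hcdef
      have hc2 : c ^ 2 = θ⁻¹ := by
        rw [hcdef, ← Real.sqrt_inv, Real.sq_sqrt (by positivity)]
      have hβ : 4 * π * θ < 4 * π := by nlinarith
      have key := hAT (4 * π * θ) hβ (fun y => c * u y) (hMem _)
        (by rw [hgradint, hc2, inv_mul_cancel₀ (ne_of_gt hθpos)])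
      rw [hsqint, hc2] at key
      have key2 : (∫ x, (Real.exp (4 * π * (u x) ^ 2) - 1) ∂volume)
          = ∫ x, (Real.exp (4 * π * θ * (c * u x) ^ 2) - 1) ∂volume := by
        refine integral_congr_ae (ae_of_all _ fun x => ?_)
        dsimp only
        have h2 : 4 * π * θ * (c * u x) ^ 2 = 4 * π * (u x) ^ 2 := by
          rw [mul_pow, hc2]
          field_simp
        rw [h2]
      rw [← key2] at key
      have hcoef : C / (1 - 4 * π * θ / (4 * π)) = C / (1 - θ) := by
        congr 1
        field_simp
      rw [hcoef] at key
      have h1θ : (0:ℝ) < 1 - θ := by linarith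
      have hmle : m ≤ 1 - θ := by linarith
      have : C / (1 - θ) * (θ⁻¹ * m) ≤ 2 * C := by
        rw [div_mul_eq_mul_div, div_le_iff₀ h1θ]
        have : θ⁻¹ ≤ 2 := by
          rw [inv_le_comm₀ (by linarith) (by norm_num)]; linarith
        have h1 : θ⁻¹ * m ≤ 2 * m := mul_le_mul_of_nonneg_right this hm0
        nlinarith [mul_le_mul_of_nonneg_left h1 (le_of_lt hC),
          mul_le_mul_of_nonneg_left hmle (le_of_lt hC)]
      linarith
end

section
/- For k ≥ 1, let w_k : ℝ → ℝ be given by w_k(s) = 0 for s < 0, w_k(s) = s/√k for 0 ≤ s ≤ k, and w_k(s) = √k for s > k, and define u_k : ℝ² → ℝ radially by w_k(s) = √(4π) u_k(e^{-s/2}) with |x|² = e^{-s}. Then ‖∇u_k‖₂ = 1 and ‖u_k‖₂² = (1/2)(1/k − e^{-k} − k^{-1}e^{-k}), so ‖u_k‖₂ → 0 as k → ∞. -/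
open MeasureTheory Real Filter

noncomputable def Ffun (K : ℝ) (r : ℝ) : ℝ :=
  if Real.exp (-K/2) < r ∧ r < 1 then (π * K * r ^ 2)⁻¹ else 0

noncomputable def qfun (K : ℝ) (r : ℝ) : ℝ :=
  if r ≤ Real.exp (-K/2) then K / (4*π) else if r ≤ 1 then (Real.log r)^2 / (π*K) else 0


lemma Fint (K : ℝ) (hK : 1 ≤ K) :
    ∫ y in Set.Ioi (0:ℝ), y * Ffun K y = (2 * π)⁻¹ := by
  have hK0 : (0:ℝ) < K := lt_of_lt_of_le one_pos hK
  set b := Real.exp (-K/2) with hbdef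
  have hb0 : 0 < b := Real.exp_pos _
  have hb1 : b < 1 := Real.exp_lt_one_iff.2 (by linarith)
  have hind : ∀ y : ℝ, y * Ffun K y = Set.indicator (Set.Ioo b 1) (fun y => (π * K * y)⁻¹) y := by
    intro y
    by_cases hy : b < y ∧ y < 1
    · rw [Set.indicator_of_mem (Set.mem_Ioo.2 hy)]
      have hy0 : y ≠ 0 := (lt_trans hb0 hy.1).ne'
      rw [Ffun, if_pos hy]
      field_simp
    · rw [Set.indicator_of_notMem (by simpa [Set.mem_Ioo] using hy), Ffun, if_neg hy, mul_zero]
  simp_rw [hind]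
  have hss : Set.Ioi (0:ℝ) ∩ Set.Ioo b 1 = Set.Ioo b 1 :=
    Set.inter_eq_self_of_subset_right (fun y hy => lt_trans hb0 hy.1)
  rw [setIntegral_indicator measurableSet_Ioo, hss,
    ← MeasureTheory.integral_Ioc_eq_integral_Ioo,
    ← intervalIntegral.integral_of_le hb1.le]
  have h0 : (0:ℝ) ∉ Set.uIcc b 1 := by
    rw [Set.uIcc_of_le hb1.le]
    intro h; exact absurd h.1 (not_le.2 hb0)
  have : ∀ y : ℝ, (π * K * y)⁻¹ = (π * K)⁻¹ * y⁻¹ := by intro y; rw [mul_inv]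
  simp_rw [this]
  rw [intervalIntegral.integral_const_mul, integral_inv h0, one_div,
    Real.log_inv, Real.log_exp]
  field_simp

lemma qint (K : ℝ) (hK : 1 ≤ K) :
    ∫ y in Set.Ioi (0:ℝ), y * qfun K y
      = (4*π)⁻¹ * (1/K - Real.exp (-K) - Real.exp (-K)/K) := by
  have hK0 : (0:ℝ) < K := lt_of_lt_of_le one_pos hK
  set b := Real.exp (-K/2) with hbdef
  have hb0 : 0 < b := Real.exp_pos _
  have hb1 : b < 1 := Real.exp_lt_one_iff.2 (by linarith)
  have hπ : (0:ℝ) < π := Real.pi_pos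
  -- integrability pieces
  have hint1 : IntegrableOn (fun y => y * qfun K y) (Set.Ioc 0 b) := by
    have hc : Continuous (fun y : ℝ => y * (K/(4*π))) := by continuity
    refine (hc.integrableOn_Ioc).congr_fun ?_ measurableSet_Ioc
    intro y hy
    simp only [qfun, if_pos (show y ≤ Real.exp (-K/2) from hy.2)]
  have hcont2 : ContinuousOn (fun y : ℝ => y * (Real.log y)^2 / (π*K)) (Set.Icc b 1) := by
    have hlog : ContinuousOn Real.log (Set.Icc b 1) :=
      Real.continuousOn_log.mono (fun y hy =>
        Set.mem_compl_singleton_iff.2 (ne_of_gt (lt_of_lt_of_le hb0 hy.1)))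
    exact (continuousOn_id.mul (hlog.pow 2)).div_const _
  have hint2 : IntegrableOn (fun y => y * qfun K y) (Set.Ioc b 1) := by
    refine ((hcont2.integrableOn_Icc).mono_set Set.Ioc_subset_Icc_self).congr_fun ?_
      measurableSet_Ioc
    intro y hy
    simp only [qfun, if_neg (show ¬ y ≤ Real.exp (-K/2) from not_le.2 hy.1), if_pos hy.2]
    ring
  have hint3 : IntegrableOn (fun y => y * qfun K y) (Set.Ioi 1) := by
    refine integrableOn_zero.congr_fun ?_ measurableSet_Ioi
    intro y hy
    simp only [qfun, Set.mem_Ioi.1 hy, if_neg (show ¬ y ≤ Real.exp (-K/2) from not_le.2 (lt_trans hb1 hy)),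
      if_neg (not_le.2 (Set.mem_Ioi.1 hy)),
      mul_zero]
  -- split the integral
  rw [← Set.Ioc_union_Ioi_eq_Ioi (zero_le_one (α := ℝ)),
    setIntegral_union Set.Ioc_disjoint_Ioi_same measurableSet_Ioi
      (by rw [← Set.Ioc_union_Ioc_eq_Ioc hb0.le hb1.le]; exact hint1.union hint2) hint3,
    ← Set.Ioc_union_Ioc_eq_Ioc hb0.le hb1.le,
    setIntegral_union (Set.Ioc_disjoint_Ioc_of_le le_rfl) measurableSet_Ioc hint1 hint2]
  have e3 : ∫ y in Set.Ioi (1:ℝ), y * qfun K y = 0 := by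
    rw [setIntegral_congr_fun measurableSet_Ioi (g := fun _ => (0:ℝ))]
    · simp
    · intro y hy
      simp only [qfun, if_neg (show ¬ y ≤ Real.exp (-K/2) from not_le.2 (lt_trans hb1 hy)), if_neg (not_le.2 (Set.mem_Ioi.1 hy)), mul_zero]
  have e1 : ∫ y in Set.Ioc (0:ℝ) b, y * qfun K y = b^2/2 * (K/(4*π)) := by
    rw [setIntegral_congr_fun measurableSet_Ioc (g := fun y => y * (K/(4*π)))
      (fun y hy => by simp only [qfun, if_pos (show y ≤ Real.exp (-K/2) from hy.2)]),
      ← intervalIntegral.integral_of_le hb0.le, intervalIntegral.integral_mul_const,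
      integral_id]
    ring
  have e2 : ∫ y in Set.Ioc b 1, y * qfun K y
      = ((1:ℝ)/4 - (b^2/2 * (K/2)^2 + b^2/2 * (K/2) + b^2/4)) / (π*K) := by
    rw [setIntegral_congr_fun measurableSet_Ioc (g := fun y => y * (Real.log y)^2 / (π*K))
      (fun y hy => by simp only [qfun, if_neg (show ¬ y ≤ Real.exp (-K/2) from not_le.2 hy.1), if_pos hy.2]; ring),
      ← intervalIntegral.integral_of_le hb1.le]
    have hftc : ∀ y ∈ Set.uIcc b 1, HasDerivAt
        (fun y : ℝ => (y^2/2 * (Real.log y)^2 - y^2/2 * Real.log y + y^2/4) / (π*K))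
        (y * (Real.log y)^2 / (π*K)) y := by
      intro y hy
      rw [Set.uIcc_of_le hb1.le] at hy
      have hy0 : (0:ℝ) < y := lt_of_lt_of_le hb0 hy.1
      have hl : HasDerivAt Real.log y⁻¹ y := Real.hasDerivAt_log hy0.ne'
      have hsq : HasDerivAt (fun y : ℝ => y^2/2) y y := by
        simpa using (hasDerivAt_pow 2 y).div_const 2
      have hq : HasDerivAt (fun y : ℝ => y^2/4) (2*y/4) y := by
        simpa using (hasDerivAt_pow 2 y).div_const 4
      have hl2 : HasDerivAt (fun y : ℝ => (Real.log y)^2) (2 * Real.log y * y⁻¹) y := by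
        simpa using hl.fun_pow 2
      have := (((hsq.fun_mul hl2).fun_sub (hsq.fun_mul hl)).fun_add hq).div_const (π*K)
      refine this.congr_deriv ?_
      field_simp
      ring
    rw [intervalIntegral.integral_eq_sub_of_hasDerivAt hftc
      (hcont2.intervalIntegrable_of_Icc hb1.le)]
    rw [Real.log_one, hbdef, Real.log_exp]
    ring_nf
  rw [e1, e2, e3]
  have hb2 : b^2 = Real.exp (-K) := by
    rw [hbdef, sq, ← Real.exp_add]; norm_num
  rw [hb2]
  field_simp
  ring

lemma radial2 (f : ℝ → ℝ) :
    ∫ x : EuclideanSpace ℝ (Fin 2), f ‖x‖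
      = 2 * π * ∫ y in Set.Ioi (0:ℝ), y * f y := by
  have hb : volume (Metric.ball (0 : EuclideanSpace ℝ (Fin 2)) 1) = ENNReal.ofReal π := by
    rw [EuclideanSpace.volume_ball]
    norm_num [Real.sq_sqrt Real.pi_pos.le, Real.Gamma_two]
  rw [MeasureTheory.integral_fun_norm_addHaar volume f]
  rw [finrank_euclideanSpace_fin, measureReal_def, hb,
    ENNReal.toReal_ofReal Real.pi_pos.le]
  norm_num [smul_eq_mul]
  ring

lemma grad_ae (K : ℝ) (hK : 1 ≤ K) (u : EuclideanSpace ℝ (Fin 2) → ℝ)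
    (hu : ∀ x : EuclideanSpace ℝ (Fin 2), x ≠ 0 →
      u x = (if -Real.log (‖x‖^2) < 0 then 0
        else if -Real.log (‖x‖^2) ≤ K then -Real.log (‖x‖^2) / Real.sqrt K
        else Real.sqrt K) / Real.sqrt (4*π)) :
    ∀ᵐ x : EuclideanSpace ℝ (Fin 2), ‖fderiv ℝ u x‖^2 = Ffun K ‖x‖ := by
  have hK0 : (0:ℝ) < K := lt_of_lt_of_le one_pos hK
  have hπ : (0:ℝ) < π := Real.pi_pos
  set b := Real.exp (-K/2) with hbdef
  have hb0 : 0 < b := Real.exp_pos _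
  have hb1 : b < 1 := Real.exp_lt_one_iff.2 (by linarith)
  set a := Real.sqrt K with hadef
  set c := Real.sqrt (4*π) with hcdef
  have ha0 : 0 < a := Real.sqrt_pos.2 hK0
  have hc0 : 0 < c := Real.sqrt_pos.2 (by positivity)
  have ha2 : a^2 = K := Real.sq_sqrt hK0.le
  have hc2 : c^2 = 4*π := Real.sq_sqrt (by positivity)
  have hN : volume ({(0 : EuclideanSpace ℝ (Fin 2))}
      ∪ Metric.sphere 0 b ∪ Metric.sphere 0 1) = 0 := by
    refine measure_union_null (measure_union_null ?_ ?_) ?_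
    · exact measure_singleton 0
    · exact Measure.addHaar_sphere volume 0 b
    · exact Measure.addHaar_sphere volume 0 1
  filter_upwards [measure_eq_zero_iff_ae_notMem.1 hN] with x hx
  simp only [Set.mem_union, Set.mem_singleton_iff, mem_sphere_zero_iff_norm, not_or] at hx
  obtain ⟨⟨hx0, hxb⟩, hx1⟩ := hx
  have hr0 : 0 < ‖x‖ := norm_pos_iff.2 hx0
  -- helper : value of u on regions
  have hval : ∀ y : EuclideanSpace ℝ (Fin 2), 0 < ‖y‖ →
      u y = (if 0 < Real.log ‖y‖ then 0
        else if -(2 * Real.log ‖y‖) ≤ K then -(2 * Real.log ‖y‖) / a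
        else a) / c := by
    intro y hy
    have hy0 : y ≠ 0 := norm_pos_iff.1 hy
    rw [hu y hy0]
    have hlog : Real.log (‖y‖^2) = 2 * Real.log ‖y‖ := by
      rw [Real.log_pow]; push_cast; ring
    rw [hlog]
    congr 1
    by_cases h : 0 < Real.log ‖y‖
    · rw [if_pos (by linarith), if_pos h]
    · rw [if_neg (by linarith), if_neg h]
  rcases lt_trichotomy ‖x‖ b with h | h | h
  · -- inner region: u locally constant a / c
    have ho : IsOpen {y : EuclideanSpace ℝ (Fin 2) | 0 < ‖y‖ ∧ ‖y‖ < b} :=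
      (isOpen_lt continuous_const continuous_norm).inter
        (isOpen_lt continuous_norm continuous_const)
    have hev : u =ᶠ[nhds x] fun _ => a / c := by
      filter_upwards [ho.mem_nhds ⟨hr0, h⟩] with y hy
      rw [hval y hy.1]
      have hlb : Real.log ‖y‖ < -K/2 := by
        have := Real.log_lt_log hy.1 hy.2
        rwa [hbdef, Real.log_exp] at this
      rw [if_neg (by linarith), if_neg (by linarith)]
    rw [hev.fderiv_eq, fderiv_const_apply]
    have hcond : ¬ (b < ‖x‖ ∧ ‖x‖ < 1) := fun hc => absurd h (not_lt.2 hc.1.le)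
    simp [Ffun, hcond]
    exact fun h' h'' => absurd ⟨h', h''⟩ hcond
  · exact absurd h hxb
  rcases lt_trichotomy ‖x‖ 1 with h1 | h1 | h1
  · -- middle region
    have hxs : (0:ℝ) < ‖x‖^2 := by positivity
    have h2 : HasFDerivAt (fun y : EuclideanSpace ℝ (Fin 2) => ‖y‖^2)
        ((2:ℕ) • innerSL ℝ x) x := (hasStrictFDerivAt_norm_sq x).hasFDerivAt
    have hlogd : HasFDerivAt (fun y : EuclideanSpace ℝ (Fin 2) => Real.log (‖y‖^2))
        ((‖x‖^2)⁻¹ • ((2:ℕ) • innerSL ℝ x)) x :=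
      h2.log hxs.ne'
    have hmul := hlogd.const_mul (-(a*c)⁻¹)
    have ho : IsOpen {y : EuclideanSpace ℝ (Fin 2) | b < ‖y‖ ∧ ‖y‖ < 1} :=
      (isOpen_lt continuous_const continuous_norm).inter
        (isOpen_lt continuous_norm continuous_const)
    have hev : u =ᶠ[nhds x] fun y => (-(a*c)⁻¹) * Real.log (‖y‖^2) := by
      filter_upwards [ho.mem_nhds ⟨h, h1⟩] with y hy
      have hy0 : 0 < ‖y‖ := lt_trans hb0 hy.1
      rw [hval y hy0]
      have hlb : -K/2 < Real.log ‖y‖ := by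
        have := Real.log_lt_log hb0 hy.1
        rwa [hbdef, Real.log_exp] at this
      have hub : Real.log ‖y‖ < 0 := Real.log_neg hy0 hy.2
      rw [if_neg (not_lt.2 hub.le), if_pos (by linarith)]
      have hlog : Real.log (‖y‖^2) = 2 * Real.log ‖y‖ := by
        rw [Real.log_pow]; push_cast; ring
      rw [hlog]
      field_simp
    rw [(hmul.congr_of_eventuallyEq hev).fderiv]
    have hsm : (-(a*c)⁻¹) • ((‖x‖^2)⁻¹ • ((2:ℕ) • innerSL ℝ x))
        = ((-(a*c)⁻¹) * ((‖x‖^2)⁻¹ * 2)) • innerSL ℝ x := by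
      rw [← Nat.cast_smul_eq_nsmul ℝ 2 (innerSL ℝ x), smul_smul, smul_smul]
      congr 1
      push_cast
      ring
    rw [hsm, norm_smul, Real.norm_eq_abs, innerSL_apply_norm, mul_pow, sq_abs,
      Ffun, if_pos ⟨h, h1⟩]
    have hac : ((a*c)^2) = K * (4*π) := by rw [mul_pow, ha2, hc2]
    rw [show (-(a*c)⁻¹ * ((‖x‖^2)⁻¹ * 2))^2 = ((a*c)^2)⁻¹ * (((‖x‖^2)^2)⁻¹ * 4) by ring, hac]
    field_simp
  · exact absurd h1 hx1
  · -- outer region: u locally 0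
    have ho : IsOpen {y : EuclideanSpace ℝ (Fin 2) | 1 < ‖y‖} :=
      isOpen_lt continuous_const continuous_norm
    have hev : u =ᶠ[nhds x] fun _ => (0:ℝ) := by
      filter_upwards [ho.mem_nhds h1] with y hy
      have hy0 : 0 < ‖y‖ := lt_trans one_pos hy
      rw [hval y hy0, if_pos (Real.log_pos hy), zero_div]
    rw [hev.fderiv_eq, fderiv_const_apply]
    have hcond : ¬ (b < ‖x‖ ∧ ‖x‖ < 1) := fun hc => absurd h1 (not_lt.2 hc.2.le)
    simp [Ffun, hcond]
    exact fun h' h'' => absurd ⟨h', h''⟩ hcond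

/-- The truncated-linear Moser profiles `w_k` give radial functions `u_k` on `ℝ²`
(via `w_k(s) = √(4π) u_k(e^{-s/2})`, `|x|² = e^{-s}`) with `‖∇u_k‖₂ = 1` and
`‖u_k‖₂² = (1/2)(1/k − e^{-k} − k⁻¹e^{-k}) → 0`. -/
theorem moser_profile_norms
    (w : ℕ → ℝ → ℝ)
    (hw : ∀ k : ℕ, 1 ≤ k → ∀ s : ℝ,
      w k s = if s < 0 then 0
        else if s ≤ (k : ℝ) then s / Real.sqrt (k : ℝ)
        else Real.sqrt (k : ℝ))
    (u : ℕ → EuclideanSpace ℝ (Fin 2) → ℝ)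
    (hu : ∀ k : ℕ, ∀ x : EuclideanSpace ℝ (Fin 2), x ≠ 0 →
      u k x = w k (-Real.log (‖x‖ ^ 2)) / Real.sqrt (4 * π)) :
    (∀ k : ℕ, 1 ≤ k →
      Real.sqrt (∫ x : EuclideanSpace ℝ (Fin 2), ‖fderiv ℝ (u k) x‖ ^ 2 ∂volume) = 1) ∧
    (∀ k : ℕ, 1 ≤ k →
      ∫ x : EuclideanSpace ℝ (Fin 2), (u k x) ^ 2 ∂volume =
        (1 / 2) * (1 / (k : ℝ) - Real.exp (-(k : ℝ)) - Real.exp (-(k : ℝ)) / (k : ℝ))) ∧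
    Tendsto (fun k : ℕ =>
      Real.sqrt (∫ x : EuclideanSpace ℝ (Fin 2), (u k x) ^ 2 ∂volume)) atTop (nhds 0) := by
  have hπ : (0:ℝ) < π := Real.pi_pos
  -- Part 2 : the L² norm
  have key2 : ∀ k : ℕ, 1 ≤ k →
      ∫ x : EuclideanSpace ℝ (Fin 2), (u k x) ^ 2 ∂volume =
        (1 / 2) * (1 / (k : ℝ) - Real.exp (-(k : ℝ)) - Real.exp (-(k : ℝ)) / (k : ℝ)) := by
    intro k hk
    set K := (k : ℝ) with hKdef
    have hK : (1:ℝ) ≤ K := by rw [hKdef]; exact_mod_cast hk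
    have hK0 : (0:ℝ) < K := lt_of_lt_of_le one_pos hK
    set b := Real.exp (-K/2) with hbdef
    have hb0 : 0 < b := Real.exp_pos _
    have ha2 : (Real.sqrt K)^2 = K := Real.sq_sqrt hK0.le
    have hc2 : (Real.sqrt (4*π))^2 = 4*π := Real.sq_sqrt (by positivity)
    have hae : ∀ᵐ x : EuclideanSpace ℝ (Fin 2), (u k x)^2 = qfun K ‖x‖ := by
      have h0 : volume ({(0:EuclideanSpace ℝ (Fin 2))} : Set _) = 0 := measure_singleton 0
      filter_upwards [measure_eq_zero_iff_ae_notMem.1 h0] with x hx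
      simp only [Set.mem_singleton_iff] at hx
      have hr0 : 0 < ‖x‖ := norm_pos_iff.2 hx
      rw [hu k x hx, hw k hk, div_pow, hc2]
      set s := -Real.log (‖x‖^2) with hsdef
      have hs : s = -(2 * Real.log ‖x‖) := by
        rw [hsdef, Real.log_pow]; push_cast; ring
      unfold qfun
      by_cases h1 : ‖x‖ ≤ b
      · have hls : Real.log ‖x‖ ≤ -K/2 := by
          have := (Real.log_le_log_iff hr0 hb0).2 h1
          rwa [hbdef, Real.log_exp] at this
        have hKs : K ≤ s := by rw [hs]; linarith
        rw [if_pos h1, if_neg (not_lt.2 (by linarith : (0:ℝ) ≤ s))]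
        by_cases h2 : s ≤ K
        · rw [if_pos h2, le_antisymm h2 hKs, div_pow, ha2]
          field_simp
        · rw [if_neg h2, ha2]
      · push_neg at h1
        have hls : -K/2 < Real.log ‖x‖ := by
          have := Real.log_lt_log hb0 h1
          rwa [hbdef, Real.log_exp] at this
        have hsK : s < K := by rw [hs]; linarith
        rw [if_neg (not_le.2 h1)]
        by_cases h2 : ‖x‖ ≤ 1
        · have hlneg : Real.log ‖x‖ ≤ 0 := Real.log_nonpos hr0.le h2
          have hs0 : 0 ≤ s := by rw [hs]; linarith
          rw [if_pos h2, if_neg (not_lt.2 hs0), if_pos hsK.le, div_pow, ha2, hs]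
          field_simp
          ring
        · push_neg at h2
          have hlp : 0 < Real.log ‖x‖ := Real.log_pos h2
          have hs0 : s < 0 := by rw [hs]; linarith
          rw [if_neg (not_le.2 h2), if_pos hs0]
          simp
    rw [integral_congr_ae hae, radial2 (qfun K), qint K hK]
    field_simp
    ring
  refine ⟨?_, key2, ?_⟩
  · -- Part 1 : the Dirichlet norm
    intro k hk
    set K := (k : ℝ) with hKdef
    have hK : (1:ℝ) ≤ K := by rw [hKdef]; exact_mod_cast hk
    have hu' : ∀ x : EuclideanSpace ℝ (Fin 2), x ≠ 0 →
        u k x = (if -Real.log (‖x‖^2) < 0 then 0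
          else if -Real.log (‖x‖^2) ≤ K then -Real.log (‖x‖^2) / Real.sqrt K
          else Real.sqrt K) / Real.sqrt (4*π) := by
      intro x hx
      rw [hu k x hx, hw k hk]
    have hae := grad_ae K hK (u k) hu'
    rw [integral_congr_ae hae, radial2 (Ffun K), Fint K hK]
    rw [show 2 * π * (2*π)⁻¹ = 1 by field_simp, Real.sqrt_one]
  · -- Part 3 : the limit
    have ha : Tendsto (fun k : ℕ => 1/(k:ℝ)) atTop (nhds 0) :=
      tendsto_one_div_atTop_nhds_zero_nat
    have hb : Tendsto (fun k : ℕ => Real.exp (-(k:ℝ))) atTop (nhds 0) :=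
      Real.tendsto_exp_neg_atTop_nhds_zero.comp tendsto_natCast_atTop_atTop
    have hc : Tendsto (fun k : ℕ => Real.exp (-(k:ℝ))/(k:ℝ)) atTop (nhds 0) := by
      have := hb.mul ha
      simpa [div_eq_mul_inv] using this
    have hlim : Tendsto (fun k : ℕ =>
        (1/2) * (1/(k:ℝ) - Real.exp (-(k:ℝ)) - Real.exp (-(k:ℝ))/(k:ℝ))) atTop (nhds 0) := by
      have := ((ha.sub hb).sub hc).const_mul (1/2 : ℝ)
      simpa using this
    have hs : Tendsto (fun k : ℕ =>
        Real.sqrt ((1/2) * (1/(k:ℝ) - Real.exp (-(k:ℝ)) - Real.exp (-(k:ℝ))/(k:ℝ))))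
        atTop (nhds 0) := by
      have h := (Real.continuous_sqrt.tendsto 0).comp hlim
      rw [Real.sqrt_zero] at h
      exact h
    exact hs.congr' ((eventually_ge_atTop 1).mono fun k hk => by simp only [key2 k hk])
end

section
/- For k ≥ 1 define f_k : (0,∞) → ℝ by f_k(R) = √k / √(4/R² + log R² + k) for R > e^{-k/2} and f_k(R) = R√k/2 for 0 < R ≤ e^{-k/2}. Then sup_{R > e^{-k/2}} f_k(R) = √k/√(1 + log 4 + k), sup_{0 < R ≤ e^{-k/2}} f_k(R) = √k/(2e^{k/2}), and hence sup_{R>0} f_k(R) → 1 as k → ∞. -/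
open Real Filter

private lemma key_ineq (R : ℝ) (hR : 0 < R) :
    1 + Real.log 4 ≤ 4 / R ^ 2 + Real.log (R ^ 2) := by
  have h4 : (0:ℝ) < 4 / R ^ 2 := by positivity
  have h := Real.log_le_sub_one_of_pos h4
  rw [Real.log_div (by norm_num) (by positivity)] at h
  linarith


/-- Asymptotics of the optimality functions `f_k` in the proof of sharpness of the
Zygmund-type inequality in `H¹(ℝ²)`. -/
theorem optimality_function_sup
    (f : ℕ → ℝ → ℝ)
    (hf : ∀ k : ℕ, 1 ≤ k → ∀ R : ℝ, 0 < R →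
      f k R = if Real.exp (-(k : ℝ) / 2) < R then
          Real.sqrt (k : ℝ) / Real.sqrt (4 / R ^ 2 + Real.log (R ^ 2) + (k : ℝ))
        else R * Real.sqrt (k : ℝ) / 2) :
    (∀ k : ℕ, 1 ≤ k →
      sSup {y : ℝ | ∃ R : ℝ, Real.exp (-(k : ℝ) / 2) < R ∧ y = f k R} =
        Real.sqrt (k : ℝ) / Real.sqrt (1 + Real.log 4 + (k : ℝ))) ∧
    (∀ k : ℕ, 1 ≤ k →
      sSup {y : ℝ | ∃ R : ℝ, 0 < R ∧ R ≤ Real.exp (-(k : ℝ) / 2) ∧ y = f k R} =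
        Real.sqrt (k : ℝ) / (2 * Real.exp ((k : ℝ) / 2))) ∧
    Tendsto (fun k : ℕ => sSup {y : ℝ | ∃ R : ℝ, 0 < R ∧ y = f k R})
      atTop (nhds 1) := by
  have hlog4 : (0:ℝ) ≤ Real.log 4 := Real.log_nonneg (by norm_num)
  have hlog4' : Real.log 4 ≤ 3 := by
    have := Real.log_le_sub_one_of_pos (show (0:ℝ) < 4 by norm_num)
    linarith
  -- value of f at R = 2
  have hexp_lt_two : ∀ k : ℕ, 1 ≤ k → Real.exp (-(k : ℝ) / 2) < 2 := by
    intro k hk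
    have h1 : Real.exp (-(k : ℝ) / 2) ≤ 1 := by
      apply Real.exp_le_one_iff.mpr
      have : (0:ℝ) ≤ (k:ℝ) := Nat.cast_nonneg k
      linarith
    linarith
  have hf2 : ∀ k : ℕ, 1 ≤ k →
      f k 2 = Real.sqrt (k : ℝ) / Real.sqrt (1 + Real.log 4 + (k : ℝ)) := by
    intro k hk
    rw [hf k hk 2 (by norm_num), if_pos (hexp_lt_two k hk)]
    norm_num
  -- the branch-1 upper bound
  have hub1 : ∀ k : ℕ, 1 ≤ k → ∀ R : ℝ, Real.exp (-(k : ℝ) / 2) < R →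
      f k R ≤ Real.sqrt (k : ℝ) / Real.sqrt (1 + Real.log 4 + (k : ℝ)) := by
    intro k hk R hR
    have hRpos : 0 < R := lt_trans (Real.exp_pos _) hR
    have hkpos : (0:ℝ) < (k:ℝ) := by exact_mod_cast hk
    rw [hf k hk R hRpos, if_pos hR]
    have hle : Real.sqrt (1 + Real.log 4 + (k:ℝ)) ≤
        Real.sqrt (4 / R ^ 2 + Real.log (R ^ 2) + (k:ℝ)) :=
      Real.sqrt_le_sqrt (by linarith [key_ineq R hRpos])
    have hpos : 0 < Real.sqrt (1 + Real.log 4 + (k:ℝ)) :=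
      Real.sqrt_pos.mpr (by linarith)
    exact div_le_div_of_nonneg_left (Real.sqrt_nonneg _) hpos hle
  -- branch-2 values and upper bound
  have hval2 : ∀ k : ℕ, 1 ≤ k →
      f k (Real.exp (-(k : ℝ) / 2)) = Real.sqrt (k : ℝ) / (2 * Real.exp ((k : ℝ) / 2)) := by
    intro k hk
    rw [hf k hk _ (Real.exp_pos _), if_neg (lt_irrefl _)]
    rw [neg_div, Real.exp_neg]
    ring
  have hub2 : ∀ k : ℕ, 1 ≤ k → ∀ R : ℝ, 0 < R → R ≤ Real.exp (-(k : ℝ) / 2) →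
      f k R ≤ Real.sqrt (k : ℝ) / (2 * Real.exp ((k : ℝ) / 2)) := by
    intro k hk R hRpos hRle
    rw [hf k hk R hRpos, if_neg (not_lt.mpr hRle)]
    have h1 : R * Real.sqrt (k:ℝ) / 2 ≤ Real.exp (-(k : ℝ) / 2) * Real.sqrt (k:ℝ) / 2 := by
      gcongr
    calc R * Real.sqrt (k:ℝ) / 2 ≤ Real.exp (-(k : ℝ) / 2) * Real.sqrt (k:ℝ) / 2 := h1
      _ = Real.sqrt (k : ℝ) / (2 * Real.exp ((k : ℝ) / 2)) := by
          rw [neg_div, Real.exp_neg]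
          ring
  -- the second sup is below the first value
  have hcmp : ∀ k : ℕ, 1 ≤ k →
      Real.sqrt (k : ℝ) / (2 * Real.exp ((k : ℝ) / 2)) ≤
        Real.sqrt (k : ℝ) / Real.sqrt (1 + Real.log 4 + (k : ℝ)) := by
    intro k hk
    have hkpos : (0:ℝ) < (k:ℝ) := by exact_mod_cast hk
    have hexp : (k:ℝ)/2 + 1 ≤ Real.exp ((k:ℝ)/2) := Real.add_one_le_exp _
    have hsq : Real.sqrt (1 + Real.log 4 + (k:ℝ)) ≤ (k:ℝ) + 2 := by
      have h1 : 1 + Real.log 4 + (k:ℝ) ≤ ((k:ℝ) + 2) ^ 2 := by nlinarith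
      calc Real.sqrt (1 + Real.log 4 + (k:ℝ)) ≤ Real.sqrt (((k:ℝ) + 2) ^ 2) :=
            Real.sqrt_le_sqrt h1
        _ = (k:ℝ) + 2 := Real.sqrt_sq (by linarith)
    have h2 : Real.sqrt (1 + Real.log 4 + (k:ℝ)) ≤ 2 * Real.exp ((k:ℝ)/2) := by linarith
    gcongr
  -- Part 1
  have part1 : ∀ k : ℕ, 1 ≤ k →
      sSup {y : ℝ | ∃ R : ℝ, Real.exp (-(k : ℝ) / 2) < R ∧ y = f k R} =
        Real.sqrt (k : ℝ) / Real.sqrt (1 + Real.log 4 + (k : ℝ)) := by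
    intro k hk
    have hub : ∀ y ∈ {y : ℝ | ∃ R : ℝ, Real.exp (-(k : ℝ) / 2) < R ∧ y = f k R},
        y ≤ Real.sqrt (k : ℝ) / Real.sqrt (1 + Real.log 4 + (k : ℝ)) := by
      rintro y ⟨R, hR, rfl⟩
      exact hub1 k hk R hR
    have hmem : Real.sqrt (k : ℝ) / Real.sqrt (1 + Real.log 4 + (k : ℝ)) ∈
        {y : ℝ | ∃ R : ℝ, Real.exp (-(k : ℝ) / 2) < R ∧ y = f k R} :=
      ⟨2, hexp_lt_two k hk, (hf2 k hk).symm⟩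
    exact le_antisymm (csSup_le ⟨_, hmem⟩ hub) (le_csSup ⟨_, hub⟩ hmem)
  -- Part 2
  have part2 : ∀ k : ℕ, 1 ≤ k →
      sSup {y : ℝ | ∃ R : ℝ, 0 < R ∧ R ≤ Real.exp (-(k : ℝ) / 2) ∧ y = f k R} =
        Real.sqrt (k : ℝ) / (2 * Real.exp ((k : ℝ) / 2)) := by
    intro k hk
    have hub : ∀ y ∈ {y : ℝ | ∃ R : ℝ, 0 < R ∧ R ≤ Real.exp (-(k : ℝ) / 2) ∧ y = f k R},
        y ≤ Real.sqrt (k : ℝ) / (2 * Real.exp ((k : ℝ) / 2)) := by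
      rintro y ⟨R, hRpos, hRle, rfl⟩
      exact hub2 k hk R hRpos hRle
    have hmem : Real.sqrt (k : ℝ) / (2 * Real.exp ((k : ℝ) / 2)) ∈
        {y : ℝ | ∃ R : ℝ, 0 < R ∧ R ≤ Real.exp (-(k : ℝ) / 2) ∧ y = f k R} :=
      ⟨Real.exp (-(k : ℝ) / 2), Real.exp_pos _, le_refl _, (hval2 k hk).symm⟩
    exact le_antisymm (csSup_le ⟨_, hmem⟩ hub) (le_csSup ⟨_, hub⟩ hmem)
  refine ⟨part1, part2, ?_⟩
  -- Part 3
  have hfull : ∀ k : ℕ, 1 ≤ k →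
      sSup {y : ℝ | ∃ R : ℝ, 0 < R ∧ y = f k R} =
        Real.sqrt (k : ℝ) / Real.sqrt (1 + Real.log 4 + (k : ℝ)) := by
    intro k hk
    have hub : ∀ y ∈ {y : ℝ | ∃ R : ℝ, 0 < R ∧ y = f k R},
        y ≤ Real.sqrt (k : ℝ) / Real.sqrt (1 + Real.log 4 + (k : ℝ)) := by
      rintro y ⟨R, hRpos, rfl⟩
      by_cases hR : Real.exp (-(k : ℝ) / 2) < R
      · exact hub1 k hk R hR
      · exact le_trans (hub2 k hk R hRpos (not_lt.mp hR)) (hcmp k hk)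
    have hmem : Real.sqrt (k : ℝ) / Real.sqrt (1 + Real.log 4 + (k : ℝ)) ∈
        {y : ℝ | ∃ R : ℝ, 0 < R ∧ y = f k R} :=
      ⟨2, by norm_num, (hf2 k hk).symm⟩
    exact le_antisymm (csSup_le ⟨_, hmem⟩ hub) (le_csSup ⟨_, hub⟩ hmem)
  -- the limit
  set c : ℝ := 1 + Real.log 4 with hc
  have hcpos : (0:ℝ) < c := by simp [hc]; linarith
  have hdiv : Tendsto (fun k : ℕ => 1 - c / (c + (k:ℝ))) atTop (nhds 1) := by
    have h0 : Tendsto (fun k : ℕ => c / (c + (k:ℝ))) atTop (nhds 0) :=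
      Tendsto.div_atTop tendsto_const_nhds
        (tendsto_atTop_add_const_left _ c tendsto_natCast_atTop_atTop)
    simpa using tendsto_const_nhds.sub h0
  have hsq : Tendsto (fun k : ℕ => Real.sqrt (1 - c / (c + (k:ℝ)))) atTop (nhds 1) := by
    have h := (Real.continuous_sqrt.tendsto 1).comp hdiv
    simpa [Function.comp_def] using h
  apply hsq.congr'
  filter_upwards [eventually_ge_atTop 1] with k hk
  rw [hfull k hk]
  have hkpos : (0:ℝ) < (k:ℝ) := by exact_mod_cast hk
  have hck : (0:ℝ) < c + (k:ℝ) := by linarith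
  rw [← Real.sqrt_div hkpos.le]
  congr 1
  field_simp
  ring
end
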